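/- Let ψ : ℝ^M → ℂ^D be a differentiable family of unit vectors, fix θ* ∈ ℝ^M, let 0 < t ≤ 1, and set K = (t − 1)·ψ(θ*)ψ(θ*)† + I, F = K†K, p(θ) = ⟨ψ(θ), F ψ(θ)⟩, ψ^{ps}(θ) = K ψ(θ)/√(p(θ)). Then the distillation is lossless: for all i, j, p(θ*) · 𝓘_{ij}(θ* | ψ^{ps}) = 𝓘_{ij}(θ* | ψ), i.e., the postselection probability times the postselected QFIM equals the original QFIM. Moreover, viewing the QFIM as an M×M real matrix, 𝓘(θ* | ψ^{ps}) = (1/t²) 𝓘(θ* | ψ), so if 𝓘(θ* | ψ) is invertible then for every M×M real matrix W one has Tr[W · 𝓘(θ* | ψ^{ps})⁻¹] = t² · Tr[W · 𝓘(θ* | ψ)⁻¹]. -/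

import Mathlib

noncomputable section

open Matrix

/-- Standard Hermitian inner product on `ℂ^D`, conjugate-linear in the first argument. -/
def dotc {D : ℕ} (x y : Fin D → ℂ) : ℂ := ∑ d, starRingEnd ℂ (x d) * y d

/-- Partial derivative of a parametrized family with respect to the `i`-th parameter. -/
def pder {M D : ℕ} (i : Fin M) (φ : (Fin M → ℝ) → (Fin D → ℂ)) (θ : Fin M → ℝ) :
    Fin D → ℂ :=
  fderiv ℝ φ θ (Pi.single i 1)

/-- Pure-state quantum Fisher information matrix entry
`𝓘_{ij}(θ|φ) = 4 Re[⟨∂_iφ,∂_jφ⟩ − ⟨∂_iφ,φ⟩⟨φ,∂_jφ⟩]`. -/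
def qfim {M D : ℕ} (φ : (Fin M → ℝ) → (Fin D → ℂ)) (θ : Fin M → ℝ) (i j : Fin M) : ℝ :=
  4 * (dotc (pder i φ θ) (pder j φ θ) -
        dotc (pder i φ θ) (φ θ) * dotc (φ θ) (pder j φ θ)).re

/-- The quantum Fisher information matrix as an `M×M` real matrix. -/
def qfimMatrix {M D : ℕ} (φ : (Fin M → ℝ) → (Fin D → ℂ)) (θ : Fin M → ℝ) :
    Matrix (Fin M) (Fin M) ℝ :=
  Matrix.of fun i j => qfim φ θ i j

lemma dotc_add_left {D : ℕ} (x y z : Fin D → ℂ) : dotc (x + y) z = dotc x z + dotc y z := by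
  simp [dotc, add_mul, Finset.sum_add_distrib]

lemma dotc_add_right {D : ℕ} (x y z : Fin D → ℂ) : dotc x (y + z) = dotc x y + dotc x z := by
  simp [dotc, mul_add, Finset.sum_add_distrib]

lemma dotc_smul_left {D : ℕ} (a : ℂ) (x y : Fin D → ℂ) :
    dotc (a • x) y = starRingEnd ℂ a * dotc x y := by
  simp [dotc, Finset.mul_sum, mul_assoc]

lemma dotc_smul_right {D : ℕ} (a : ℂ) (x y : Fin D → ℂ) :
    dotc x (a • y) = a * dotc x y := by
  simp only [dotc, Pi.smul_apply, smul_eq_mul, Finset.mul_sum]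
  exact Finset.sum_congr rfl fun d _ => by ring

lemma dotc_conj {D : ℕ} (x y : Fin D → ℂ) : starRingEnd ℂ (dotc x y) = dotc y x := by
  simp [dotc, map_sum, mul_comm]

lemma dotc_adj {D : ℕ} (A : Matrix (Fin D) (Fin D) ℂ) (x y : Fin D → ℂ) :
    dotc x (Aᴴ.mulVec y) = dotc (A.mulVec x) y := by
  simp only [dotc, Matrix.mulVec, dotProduct, Matrix.conjTranspose_apply,
    map_sum, _root_.map_mul, Finset.mul_sum, Finset.sum_mul]
  rw [Finset.sum_comm]
  refine Finset.sum_congr rfl fun d _ => Finset.sum_congr rfl fun e _ => ?_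
  rw [show (star (A d e) : ℂ) = starRingEnd ℂ (A d e) from rfl]
  ring

lemma dotc_rsmul_left {D : ℕ} (r : ℝ) (x y : Fin D → ℂ) :
    dotc (r • x) y = (r : ℂ) * dotc x y := by
  have h : r • x = (r : ℂ) • x := by ext d; simp [Complex.real_smul]
  rw [h, dotc_smul_left]; simp

lemma dotc_rsmul_right {D : ℕ} (r : ℝ) (x y : Fin D → ℂ) :
    dotc x (r • y) = (r : ℂ) * dotc x y := by
  have h : r • y = (r : ℂ) • y := by ext d; simp [Complex.real_smul]
  rw [h, dotc_smul_right]

/-- **Lossless distillation.** With `K = (t−1)|ψ(θ*)⟩⟨ψ(θ*)| + I`, the postselection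
probability times the postselected QFIM equals the original QFIM; as matrices
`𝓘(θ*|ψ^{ps}) = (1/t²) 𝓘(θ*|ψ)`, and hence every scalar Cramér–Rao risk
`Tr[W 𝓘⁻¹]` is reduced by the factor `t²`. -/
theorem distillation_is_lossless
    (M D : ℕ) (ψ : (Fin M → ℝ) → (Fin D → ℂ))
    (hψ : Differentiable ℝ ψ)
    (hunit : ∀ θ, dotc (ψ θ) (ψ θ) = 1)
    (θstar : Fin M → ℝ) (t : ℝ) (ht0 : 0 < t) (ht1 : t ≤ 1)
    (P : Matrix (Fin D) (Fin D) ℂ)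
    (hP : P = vecMulVec (ψ θstar) (star (ψ θstar)))
    (K : Matrix (Fin D) (Fin D) ℂ)
    (hK : K = ((t : ℂ) - 1) • P + 1)
    (F : Matrix (Fin D) (Fin D) ℂ) (hF : F = Kᴴ * K)
    (p : (Fin M → ℝ) → ℝ)
    (hp : ∀ θ, p θ = (dotc (ψ θ) (F.mulVec (ψ θ))).re)
    (ψps : (Fin M → ℝ) → (Fin D → ℂ))
    (hψps : ∀ θ', ψps θ' = (Real.sqrt (p θ'))⁻¹ • K.mulVec (ψ θ')) :
    (∀ i j, p θstar * qfim ψps θstar i j = qfim ψ θstar i j) ∧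
    qfimMatrix ψps θstar = (1 / t ^ 2) • qfimMatrix ψ θstar ∧
    (IsUnit (qfimMatrix ψ θstar).det →
      ∀ W : Matrix (Fin M) (Fin M) ℝ,
        (W * (qfimMatrix ψps θstar)⁻¹).trace = t ^ 2 * (W * (qfimMatrix ψ θstar)⁻¹).trace) := by
  have htc : (t : ℂ) ≠ 0 := by exact_mod_cast ht0.ne'
  have htr : t ≠ 0 := ht0.ne'
  -- basic algebra of K
  have hs : dotc (ψ θstar) (ψ θstar) = 1 := hunit θstar
  have hPmul : ∀ x, P.mulVec x = (dotc (ψ θstar) x) • ψ θstar := by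
    intro x
    funext d
    simp only [hP, Matrix.mulVec, dotProduct, Matrix.vecMulVec_apply, Pi.star_apply,
      Pi.smul_apply, smul_eq_mul, dotc]
    rw [Finset.sum_mul]
    refine Finset.sum_congr rfl fun e _ => ?_
    rw [show (star (ψ θstar e) : ℂ) = starRingEnd ℂ (ψ θstar e) from rfl]
    ring
  have hKmul : ∀ x, K.mulVec x = x + (((t:ℂ) - 1) * dotc (ψ θstar) x) • ψ θstar := by
    intro x
    rw [hK, Matrix.add_mulVec, Matrix.smul_mulVec, Matrix.one_mulVec, hPmul, smul_smul]
    exact add_comm _ _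
  have hKs : K.mulVec (ψ θstar) = (t:ℂ) • ψ θstar := by
    rw [hKmul, hs, mul_one]
    funext d
    simp only [Pi.add_apply, Pi.smul_apply, smul_eq_mul]
    ring
  have hl : ∀ x, dotc (K.mulVec x) (ψ θstar) = (t:ℂ) * dotc x (ψ θstar) := by
    intro x
    rw [hKmul, dotc_add_left, dotc_smul_left, _root_.map_mul, map_sub, _root_.map_one,
      Complex.conj_ofReal, dotc_conj, hs, mul_one]
    ring
  have hr : ∀ y, dotc (ψ θstar) (K.mulVec y) = (t:ℂ) * dotc (ψ θstar) y := by
    intro y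
    rw [hKmul, dotc_add_right, dotc_smul_right, hs, mul_one]
    ring
  have hKK : ∀ x y, dotc (K.mulVec x) (K.mulVec y)
      = dotc x y + ((t:ℂ)^2 - 1) * dotc x (ψ θstar) * dotc (ψ θstar) y := by
    intro x y
    conv_lhs => rw [hKmul x]
    rw [dotc_add_left, dotc_smul_left, hr y, hKmul y, dotc_add_right, dotc_smul_right,
      _root_.map_mul, map_sub, _root_.map_one, Complex.conj_ofReal, dotc_conj]
    ring
  -- value of p at θstar
  have hpstar : p θstar = t ^ 2 := by
    rw [hp, hF, ← Matrix.mulVec_mulVec, dotc_adj, hKK, hs]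
    rw [show (1 + ((t:ℂ)^2 - 1) * 1 * 1) = ((t^2 : ℝ) : ℂ) by push_cast; ring]
    rw [Complex.ofReal_re]
  have hpne : p θstar ≠ 0 := by rw [hpstar]; positivity
  -- differentiability of p
  have hψd : ∀ d, Differentiable ℝ (fun θ => ψ θ d) := differentiable_pi.mp hψ
  have hgd : Differentiable ℝ (fun θ => dotc (ψ θ) (F.mulVec (ψ θ))) := by
    have h : (fun θ => dotc (ψ θ) (F.mulVec (ψ θ)))
        = fun θ => ∑ d, (starRingEnd ℂ (ψ θ d)) * ∑ e, F d e * ψ θ e := by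
      funext θ; simp [dotc, Matrix.mulVec, dotProduct]
    rw [h]
    refine Differentiable.fun_sum fun d _ => Differentiable.mul ?_ ?_
    · exact Complex.conjCLE.differentiable.comp (hψd d)
    · exact Differentiable.fun_sum fun e _ => (hψd e).const_mul (F d e)
  have hpd : Differentiable ℝ p := by
    have h2 : p = fun θ => Complex.reCLM (dotc (ψ θ) (F.mulVec (ψ θ))) := funext fun θ => hp θ
    rw [h2]; exact Complex.reCLM.differentiable.comp hgd
  -- the rescaling function and K∘ψ
  set c : (Fin M → ℝ) → ℝ := fun θ => (Real.sqrt (p θ))⁻¹ with hc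
  set φf : (Fin M → ℝ) → (Fin D → ℂ) := fun θ => K.mulVec (ψ θ) with hφf
  have hψps_eq : ψps = fun θ => c θ • φf θ := funext fun θ => hψps θ
  have hsqrt : Real.sqrt (p θstar) = t := by
    rw [hpstar]; exact Real.sqrt_sq ht0.le
  have hcθ : c θstar = t⁻¹ := by rw [hc]; simp only [hsqrt]
  have hcd : DifferentiableAt ℝ c θstar :=
    DifferentiableAt.inv ((hpd θstar).sqrt hpne) (by rw [hsqrt]; exact htr)
  set L : (Fin D → ℂ) →L[ℝ] (Fin D → ℂ) :=
    LinearMap.toContinuousLinearMap ((Matrix.mulVecLin K).restrictScalars ℝ) with hL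
  have hLa : ∀ x, L x = K.mulVec x := by intro x; simp [hL, Matrix.mulVecLin]
  have hφderiv : HasFDerivAt φf (L.comp (fderiv ℝ ψ θstar)) θstar := by
    have h := L.hasFDerivAt.comp θstar (hψ θstar).hasFDerivAt
    have : φf = fun θ => L (ψ θ) := by funext θ; rw [hLa]
    rw [this]; exact h
  have hφd : DifferentiableAt ℝ φf θstar := hφderiv.differentiableAt
  -- formula for pder of ψps
  have hXi : ∀ i, ∃ r : ℝ, pder i ψps θstar
      = (t⁻¹ : ℝ) • K.mulVec (pder i ψ θstar) + r • ((t:ℂ) • ψ θstar) := by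
    intro i
    refine ⟨fderiv ℝ c θstar (Pi.single i 1), ?_⟩
    unfold pder
    rw [hψps_eq, fderiv_fun_smul hcd hφd]
    simp only [ContinuousLinearMap.add_apply, ContinuousLinearMap.coe_smul', Pi.smul_apply,
      ContinuousLinearMap.smulRight_apply]
    rw [hφderiv.fderiv]
    simp only [ContinuousLinearMap.coe_comp', Function.comp_apply, hLa, hcθ]
    rw [show φf θstar = (t:ℂ) • ψ θstar from hKs]
  -- the key complex identity
  have key : ∀ i j,
      dotc (pder i ψps θstar) (pder j ψps θstar)
        - dotc (pder i ψps θstar) (ψps θstar) * dotc (ψps θstar) (pder j ψps θstar)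
      = ((t:ℂ)^2)⁻¹ * (dotc (pder i ψ θstar) (pder j ψ θstar)
        - dotc (pder i ψ θstar) (ψ θstar) * dotc (ψ θstar) (pder j ψ θstar)) := by
    intro i j
    obtain ⟨ri, hi⟩ := hXi i
    obtain ⟨rj, hj⟩ := hXi j
    have hS : ψps θstar = ψ θstar := by
      rw [hψps θstar, hsqrt, hKs]
      funext d
      simp only [Pi.smul_apply, smul_eq_mul, Complex.real_smul]
      push_cast
      field_simp
    rw [hi, hj, hS]
    simp only [dotc_add_left, dotc_add_right, dotc_rsmul_left, dotc_rsmul_right,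
      dotc_smul_left, dotc_smul_right, hKK, hl, hr, hs, Complex.conj_ofReal]
    push_cast
    field_simp
    ring
  -- qfim scaling
  have hq : ∀ i j, qfim ψps θstar i j = (t ^ 2)⁻¹ * qfim ψ θstar i j := by
    intro i j
    unfold qfim
    rw [key i j]
    rw [show ((t:ℂ)^2)⁻¹ = (((t^2)⁻¹ : ℝ) : ℂ) by push_cast; ring]
    rw [Complex.re_ofReal_mul]
    ring
  have hqm : qfimMatrix ψps θstar = (1 / t ^ 2) • qfimMatrix ψ θstar := by
    ext i j
    simp only [qfimMatrix, Matrix.smul_apply, Matrix.of_apply, smul_eq_mul, one_div]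
    exact hq i j
  refine ⟨?_, hqm, ?_⟩
  · intro i j
    rw [hq i j, hpstar]
    field_simp
  · intro hdet W
    have hBinv : (qfimMatrix ψps θstar)⁻¹ = (t ^ 2) • (qfimMatrix ψ θstar)⁻¹ := by
      apply Matrix.inv_eq_right_inv
      rw [hqm, Matrix.smul_mul, Matrix.mul_smul, smul_smul,
        Matrix.mul_nonsing_inv _ hdet]
      rw [show (1 / t ^ 2) * t ^ 2 = 1 by field_simp]
      simp
    rw [hBinv, Matrix.mul_smul, Matrix.trace_smul, smul_eq_mul]

end
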